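/- Let G be a finite simple graph that is weakly f-degenerate for a function f : V(G) → ℕ. Suppose functions f₁, f₂ : V(G) → ℤ satisfy f₁(u) + f₂(u) = f(u) − 1 for all vertices u. Then there is a partition V(G) = V₁ ⊔ V₂ such that, for each i ∈ {1,2}, the function f_i is nonnegative on V_i and the induced subgraph G[V_i] is weakly f_i-degenerate. -/
import Mathlib


open scoped Classical

namespace WeakDeg

variable {V : Type*}

/-- `WeakDegenOn G S f` means: starting from the induced subgraph `G[S]` of `G` with value
function `f`, it is possible to remove all vertices by a sequence of legal applications of the
operations `Delete` and `DelSave`. `Delete(u)` removes `u` and decreases by one the value of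
every remaining neighbor of `u`; it is legal if the resulting function is nonnegative on the
remaining vertices. `DelSave(u, w)` (for `w` a neighbor of `u` with `f w < f u`) removes `u` and
decreases by one the value of every remaining neighbor of `u` except `w`; it is legal if
`f w < f u` and the resulting function is nonnegative on the remaining vertices. -/
inductive WeakDegenOn (G : SimpleGraph V) : Finset V → (V → ℤ) → Prop
  | empty (f : V → ℤ) : WeakDegenOn G ∅ f
  | delete (S : Finset V) (f : V → ℤ) (u : V) (hu : u ∈ S)
      (hleg : ∀ v ∈ S.erase u, 0 ≤ if G.Adj u v then f v - 1 else f v)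
      (h : WeakDegenOn G (S.erase u) fun v => if G.Adj u v then f v - 1 else f v) :
      WeakDegenOn G S f
  | delSave (S : Finset V) (f : V → ℤ) (u w : V) (hu : u ∈ S) (hw : w ∈ S)
      (hadj : G.Adj u w) (hlt : f w < f u)
      (hleg : ∀ v ∈ S.erase u, 0 ≤ if G.Adj u v ∧ v ≠ w then f v - 1 else f v)
      (h : WeakDegenOn G (S.erase u) fun v => if G.Adj u v ∧ v ≠ w then f v - 1 else f v) :
      WeakDegenOn G S f

/-- `G` is weakly `f`-degenerate, for `f : V → ℕ`. -/
def WeaklyDegenerateWith (G : SimpleGraph V) [Fintype V] (f : V → ℕ) : Prop :=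
  WeakDegenOn G Finset.univ fun v => (f v : ℤ)

/-- `G` is weakly `d`-degenerate. -/
def WeaklyDegenerate (G : SimpleGraph V) [Fintype V] (d : ℕ) : Prop :=
  WeaklyDegenerateWith G fun _ => d

/-- The weak degeneracy `wd(G)` of `G`: the least `d` such that `G` is weakly `d`-degenerate. -/
noncomputable def weakDegeneracy (G : SimpleGraph V) [Fintype V] : ℕ :=
  sInf {d : ℕ | WeaklyDegenerate G d}

lemma WeakDegenOn.congr {G : SimpleGraph V} {S : Finset V} {f : V → ℤ}
    (h : WeakDegenOn G S f) : ∀ g : V → ℤ, (∀ v ∈ S, f v = g v) → WeakDegenOn G S g := by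
  induction h with
  | empty f => exact fun g _ => .empty g
  | delete S f u hu hleg h ih =>
    intro g hg
    refine .delete S g u hu (fun v hv => ?_) (ih _ (fun v hv => ?_))
    · have h1 := hg v (Finset.mem_of_mem_erase hv)
      have h2 := hleg v hv
      beta_reduce at h2 ⊢
      split_ifs at h2 ⊢ <;> omega
    · have h1 := hg v (Finset.mem_of_mem_erase hv)
      beta_reduce
      split_ifs <;> omega
  | delSave S f u w hu hw hadj hlt hleg h ih =>
    intro g hg
    refine .delSave S g u w hu hw hadj ?_ (fun v hv => ?_) (ih _ (fun v hv => ?_))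
    · rw [← hg u hu, ← hg w hw]; exact hlt
    · have h1 := hg v (Finset.mem_of_mem_erase hv)
      have h2 := hleg v hv
      beta_reduce at h2 ⊢
      split_ifs at h2 ⊢ <;> omega
    · have h1 := hg v (Finset.mem_of_mem_erase hv)
      beta_reduce
      split_ifs <;> omega

lemma WeakDegenOn.split {G : SimpleGraph V} {S : Finset V} {f : V → ℤ}
    (h : WeakDegenOn G S f) :
    ∀ f₁ f₂ : V → ℤ, (∀ v ∈ S, 0 ≤ f v) → (∀ u ∈ S, f₁ u + f₂ u = f u - 1) →
    ∃ V₁ V₂ : Finset V, Disjoint V₁ V₂ ∧ V₁ ∪ V₂ = S ∧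
      ((∀ v ∈ V₁, 0 ≤ f₁ v) ∧ WeakDegenOn G V₁ f₁) ∧
      ((∀ v ∈ V₂, 0 ≤ f₂ v) ∧ WeakDegenOn G V₂ f₂) := by
  induction h with
  | empty f =>
    exact fun f₁ f₂ _ _ =>
      ⟨∅, ∅, by simp, by simp, ⟨by simp, .empty _⟩, ⟨by simp, .empty _⟩⟩
  | delete S f u hu hleg h ih =>
    intro f₁ f₂ hnn hsum
    -- a helper handling the side that contains `u`
    have main : ∀ g₁ g₂ : V → ℤ, (∀ v ∈ S, g₁ v + g₂ v = f v - 1) → 0 ≤ g₁ u →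
        ∃ V₁ V₂ : Finset V, Disjoint V₁ V₂ ∧ V₁ ∪ V₂ = S ∧
          ((∀ v ∈ V₁, 0 ≤ g₁ v) ∧ WeakDegenOn G V₁ g₁) ∧
          ((∀ v ∈ V₂, 0 ≤ g₂ v) ∧ WeakDegenOn G V₂ g₂) := by
      intro g₁ g₂ hsum hg₁u
      obtain ⟨T₁, T₂, hdisj, hunion, ⟨hn1, hw1⟩, ⟨hn2, hw2⟩⟩ :=
        ih (fun v => if G.Adj u v then g₁ v - 1 else g₁ v) g₂ (fun v hv => hleg v hv)
          (fun v hv => by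
            have h1 := hsum v (Finset.mem_of_mem_erase hv)
            beta_reduce
            split_ifs <;> omega)
      have huT1 : u ∉ T₁ := fun hc => by
        have : u ∈ T₁ ∪ T₂ := Finset.mem_union_left _ hc
        rw [hunion] at this; exact (Finset.notMem_erase u S) this
      have huT2 : u ∉ T₂ := fun hc => by
        have : u ∈ T₁ ∪ T₂ := Finset.mem_union_right _ hc
        rw [hunion] at this; exact (Finset.notMem_erase u S) this
      refine ⟨insert u T₁, T₂, ?_, ?_, ⟨?_, ?_⟩, ⟨hn2, hw2⟩⟩
      · exact Finset.disjoint_insert_left.mpr ⟨huT2, hdisj⟩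
      · rw [Finset.insert_union, hunion, Finset.insert_erase hu]
      · intro v hv
        rcases Finset.mem_insert.mp hv with rfl | hv
        · exact hg₁u
        · have h2 := hn1 v hv; beta_reduce at h2; split_ifs at h2 <;> omega
      · refine .delete _ g₁ u (Finset.mem_insert_self u _) ?_ ?_
        · rw [Finset.erase_insert huT1]; exact hn1
        · rw [Finset.erase_insert huT1]; exact hw1
    have hcase : 0 ≤ f₁ u ∨ 0 ≤ f₂ u := by
      have h1 := hsum u hu; have h2 := hnn u hu; omega
    rcases hcase with hc | hc
    · exact main f₁ f₂ hsum hc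
    · obtain ⟨V₁, V₂, hd, hun, hA, hB⟩ :=
        main f₂ f₁ (fun v hv => by have := hsum v hv; omega) hc
      exact ⟨V₂, V₁, hd.symm, by rw [Finset.union_comm]; exact hun, hB, hA⟩
  | delSave S f u w hu hw hadj hlt hleg h ih =>
    intro f₁ f₂ hnn hsum
    have hwu : w ≠ u := hadj.ne'
    have hwS : w ∈ S.erase u := Finset.mem_erase.mpr ⟨hwu, hw⟩
    have hfw : 0 ≤ f w := by
      have := hleg w hwS
      rwa [if_neg (by simp)] at this
    -- subcase a: the side containing `u` can perform a DelSave (or a Delete if `w` is in the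
    -- other side)
    have maina : ∀ g₁ g₂ : V → ℤ, (∀ v ∈ S, g₁ v + g₂ v = f v - 1) →
        0 ≤ g₁ u → g₁ w < g₁ u →
        ∃ V₁ V₂ : Finset V, Disjoint V₁ V₂ ∧ V₁ ∪ V₂ = S ∧
          ((∀ v ∈ V₁, 0 ≤ g₁ v) ∧ WeakDegenOn G V₁ g₁) ∧
          ((∀ v ∈ V₂, 0 ≤ g₂ v) ∧ WeakDegenOn G V₂ g₂) := by
      intro g₁ g₂ hsum hg₁u hg₁lt
      obtain ⟨T₁, T₂, hdisj, hunion, ⟨hn1, hw1⟩, ⟨hn2, hw2⟩⟩ :=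
        ih (fun v => if G.Adj u v ∧ v ≠ w then g₁ v - 1 else g₁ v) g₂ (fun v hv => hleg v hv)
          (fun v hv => by
            have h1 := hsum v (Finset.mem_of_mem_erase hv)
            beta_reduce
            split_ifs <;> omega)
      have huT1 : u ∉ T₁ := fun hc => by
        have : u ∈ T₁ ∪ T₂ := Finset.mem_union_left _ hc
        rw [hunion] at this; exact (Finset.notMem_erase u S) this
      have huT2 : u ∉ T₂ := fun hc => by
        have : u ∈ T₁ ∪ T₂ := Finset.mem_union_right _ hc
        rw [hunion] at this; exact (Finset.notMem_erase u S) this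
      refine ⟨insert u T₁, T₂, ?_, ?_, ⟨?_, ?_⟩, ⟨hn2, hw2⟩⟩
      · exact Finset.disjoint_insert_left.mpr ⟨huT2, hdisj⟩
      · rw [Finset.insert_union, hunion, Finset.insert_erase hu]
      · intro v hv
        rcases Finset.mem_insert.mp hv with rfl | hv
        · exact hg₁u
        · have h2 := hn1 v hv; beta_reduce at h2; split_ifs at h2 <;> omega
      · by_cases hwT : w ∈ T₁
        · refine .delSave _ g₁ u w (Finset.mem_insert_self u _)
            (Finset.mem_insert_of_mem hwT) hadj hg₁lt ?_ ?_
          · rw [Finset.erase_insert huT1]; exact hn1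
          · rw [Finset.erase_insert huT1]; exact hw1
        · refine .delete _ g₁ u (Finset.mem_insert_self u _) ?_ ?_
          · rw [Finset.erase_insert huT1]
            intro v hv
            have hvw : v ≠ w := fun hc => hwT (hc ▸ hv)
            have h2 := hn1 v hv
            beta_reduce at h2
            simp only [ne_eq, hvw, not_false_eq_true, and_true] at h2
            exact h2
          · rw [Finset.erase_insert huT1]
            refine hw1.congr _ (fun v hv => ?_)
            have hvw : v ≠ w := fun hc => hwT (hc ▸ hv)
            simp only [ne_eq, hvw, not_false_eq_true, and_true]
    -- subcase b: the side containing `u` forces `w` into itself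
    have mainb : ∀ g₁ g₂ : V → ℤ, (∀ v ∈ S, g₁ v + g₂ v = f v - 1) →
        g₁ u < 0 → g₁ w < g₁ u →
        ∃ V₁ V₂ : Finset V, Disjoint V₁ V₂ ∧ V₁ ∪ V₂ = S ∧
          ((∀ v ∈ V₁, 0 ≤ g₁ v) ∧ WeakDegenOn G V₁ g₁) ∧
          ((∀ v ∈ V₂, 0 ≤ g₂ v) ∧ WeakDegenOn G V₂ g₂) := by
      intro g₁ g₂ hsum hg₁u hg₁lt
      have hg₂u : 0 ≤ g₂ u := by have := hsum u hu; omega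
      obtain ⟨T₁, T₂, hdisj, hunion, ⟨hn1, hw1⟩, ⟨hn2, hw2⟩⟩ :=
        ih (fun v => if v = w then g₁ v + 1 else g₁ v)
          (fun v => if G.Adj u v then g₂ v - 1 else g₂ v) (fun v hv => hleg v hv)
          (fun v hv => by
            have h1 := hsum v (Finset.mem_of_mem_erase hv)
            beta_reduce
            by_cases hvw : v = w
            · subst hvw
              rw [if_pos rfl, if_pos hadj, if_neg (by simp)]
              omega
            · rw [if_neg hvw]
              simp only [ne_eq, hvw, not_false_eq_true, and_true]
              split_ifs <;> omega)
      have huT1 : u ∉ T₁ := fun hc => by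
        have : u ∈ T₁ ∪ T₂ := Finset.mem_union_left _ hc
        rw [hunion] at this; exact (Finset.notMem_erase u S) this
      have huT2 : u ∉ T₂ := fun hc => by
        have : u ∈ T₁ ∪ T₂ := Finset.mem_union_right _ hc
        rw [hunion] at this; exact (Finset.notMem_erase u S) this
      have hwT1 : w ∉ T₁ := fun hc => by
        have h2 := hn1 w hc
        beta_reduce at h2
        rw [if_pos rfl] at h2
        omega
      refine ⟨T₁, insert u T₂, ?_, ?_, ⟨?_, ?_⟩, ⟨?_, ?_⟩⟩
      · exact Finset.disjoint_insert_right.mpr ⟨huT1, hdisj⟩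
      · rw [Finset.union_insert, hunion, Finset.insert_erase hu]
      · intro v hv
        have hvw : v ≠ w := fun hc => hwT1 (hc ▸ hv)
        have h2 := hn1 v hv
        beta_reduce at h2
        rwa [if_neg hvw] at h2
      · refine hw1.congr _ (fun v hv => ?_)
        have hvw : v ≠ w := fun hc => hwT1 (hc ▸ hv)
        rw [if_neg hvw]
      · intro v hv
        rcases Finset.mem_insert.mp hv with rfl | hv
        · exact hg₂u
        · have h2 := hn2 v hv; beta_reduce at h2; split_ifs at h2 <;> omega
      · refine .delete _ g₂ u (Finset.mem_insert_self u _) ?_ ?_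
        · rw [Finset.erase_insert huT2]; exact hn2
        · rw [Finset.erase_insert huT2]; exact hw2
    -- dispatch
    have hkey : f₁ w < f₁ u ∨ f₂ w < f₂ u := by
      have h1 := hsum u hu; have h2 := hsum w hw; omega
    rcases hkey with hk | hk
    · by_cases hc : 0 ≤ f₁ u
      · exact maina f₁ f₂ hsum hc hk
      · exact mainb f₁ f₂ hsum (by omega) hk
    · have hsum' : ∀ v ∈ S, f₂ v + f₁ v = f v - 1 := fun v hv => by
        have := hsum v hv; omega
      by_cases hc : 0 ≤ f₂ u
      · obtain ⟨V₁, V₂, hd, hun, hA, hB⟩ := maina f₂ f₁ hsum' hc hk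
        exact ⟨V₂, V₁, hd.symm, by rw [Finset.union_comm]; exact hun, hB, hA⟩
      · obtain ⟨V₁, V₂, hd, hun, hA, hB⟩ := mainb f₂ f₁ hsum' (by omega) hk
        exact ⟨V₂, V₁, hd.symm, by rw [Finset.union_comm]; exact hun, hB, hA⟩

/-- Partitioning lemma: if `G` is weakly `f`-degenerate and `f₁ + f₂ = f - 1` pointwise, then
the vertex set can be partitioned into `V₁ ⊔ V₂` so that `fᵢ` is nonnegative on `Vᵢ` and the
induced subgraph `G[Vᵢ]` is weakly `fᵢ`-degenerate, for `i = 1, 2`. -/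
theorem weaklyDegenerate_partition {V : Type*} [Fintype V] [DecidableEq V] (G : SimpleGraph V)
    (f : V → ℕ) (hf : WeaklyDegenerateWith G f) (f₁ f₂ : V → ℤ)
    (hsum : ∀ u, f₁ u + f₂ u = (f u : ℤ) - 1) :
    ∃ V₁ V₂ : Finset V, Disjoint V₁ V₂ ∧ V₁ ∪ V₂ = Finset.univ ∧
      ((∀ v ∈ V₁, 0 ≤ f₁ v) ∧ WeakDegenOn G V₁ f₁) ∧
      ((∀ v ∈ V₂, 0 ≤ f₂ v) ∧ WeakDegenOn G V₂ f₂) := by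
  obtain ⟨V₁, V₂, hd, hun, h1, h2⟩ :=
    hf.split f₁ f₂ (fun v _ => Int.natCast_nonneg _) (fun u _ => hsum u)
  refine ⟨V₁, V₂, hd, ?_, h1, h2⟩
  ext x
  have hx := Finset.ext_iff.mp hun x
  simp only [Finset.mem_union] at hx ⊢
  simp [hx]

end WeakDeg
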